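/- Let K be a pyramid with parallelogram base, split into tetrahedra T₁ and T₂ by the diagonal through v₁ and v₃. Define S(K) as the space of functions v ∈ H¹(K) (equivalently, continuous on K) whose restriction to each T_ℓ is a polynomial of total degree ≤ 2, whose restriction to each of the four triangular faces of K is affine, and whose restriction to the parallelogram base is bilinear (degree ≤1 in each of the two base coordinates). Then dim S(K) = 5, and the point-evaluation functionals at the five vertices v₁,…,v₅ form a basis of the dual space S(K)'; in particular a function in S(K) vanishing at all five vertices is identically zero. -/

import Mathlib

open Matrix MvPolynomial

open Matrix MvPolynomial


lemma quad3 {x1 x2 x3 α β γ : ℝ} (h12 : x1 ≠ x2) (h13 : x1 ≠ x3) (h23 : x2 ≠ x3)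
    (e1 : α + β * x1 + γ * x1 ^ 2 = 0) (e2 : α + β * x2 + γ * x2 ^ 2 = 0)
    (e3 : α + β * x3 + γ * x3 ^ 2 = 0) : α = 0 ∧ β = 0 ∧ γ = 0 := by
  have d12 : x1 - x2 ≠ 0 := sub_ne_zero.2 h12
  have d13 : x1 - x3 ≠ 0 := sub_ne_zero.2 h13
  have d23 : x2 - x3 ≠ 0 := sub_ne_zero.2 h23
  have h1 : β + γ * (x1 + x2) = 0 := mul_left_cancel₀ d12 (by linear_combination e1 - e2)
  have h2 : β + γ * (x2 + x3) = 0 := mul_left_cancel₀ d23 (by linear_combination e2 - e3)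
  have hγ : γ = 0 := mul_left_cancel₀ d13 (by linear_combination h1 - h2)
  have hβ : β = 0 := by linear_combination h1 - (x1 + x2) * hγ
  exact ⟨by linear_combination e1 - x1 * hβ - x1 ^ 2 * hγ, hβ, hγ⟩

/-- quadratic vanishing at three distinct points vanishes everywhere -/
lemma quad_ext {x1 x2 x3 α β γ : ℝ} (h12 : x1 ≠ x2) (h13 : x1 ≠ x3) (h23 : x2 ≠ x3)
    (e1 : α + β * x1 + γ * x1 ^ 2 = 0) (e2 : α + β * x2 + γ * x2 ^ 2 = 0)
    (e3 : α + β * x3 + γ * x3 ^ 2 = 0) : ∀ r : ℝ, α + β * r + γ * r ^ 2 = 0 := by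
  obtain ⟨hα, hβ, hγ⟩ := quad3 h12 h13 h23 e1 e2 e3
  intro r; rw [hα, hβ, hγ]; ring

/-- quadratic vanishing off two points vanishes everywhere -/
lemma quad_cof2 {b1 b2 α β γ : ℝ}
    (h : ∀ r : ℝ, r ≠ b1 → r ≠ b2 → α + β * r + γ * r ^ 2 = 0) :
    ∀ r : ℝ, α + β * r + γ * r ^ 2 = 0 := by
  set m := max b1 b2 with hm
  have hb1 : ∀ k : ℝ, 0 < k → m + k ≠ b1 := fun k hk => by
    have : b1 ≤ m := le_max_left _ _; linarith
  have hb2 : ∀ k : ℝ, 0 < k → m + k ≠ b2 := fun k hk => by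
    have : b2 ≤ m := le_max_right _ _; linarith
  refine quad_ext (x1 := m+1) (x2 := m+2) (x3 := m+3) (by norm_num) (by norm_num) (by norm_num)
    (h _ (hb1 1 one_pos) (hb2 1 one_pos)) (h _ (hb1 2 two_pos) (hb2 2 two_pos))
    (h _ (hb1 3 (by norm_num)) (hb2 3 (by norm_num)))

lemma quad_cof1 {b1 α β γ : ℝ}
    (h : ∀ r : ℝ, r ≠ b1 → α + β * r + γ * r ^ 2 = 0) :
    ∀ r : ℝ, α + β * r + γ * r ^ 2 = 0 :=
  quad_cof2 (b2 := b1) (fun r h1 _ => h r h1)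


/-- restriction of a quadratic polynomial to a line is a univariate quadratic -/
lemma line_quad (p : MvPolynomial (Fin 3) ℝ) (hp : p.totalDegree ≤ 2) (x d : Fin 3 → ℝ) :
    ∃ α β γ : ℝ, ∀ r : ℝ, MvPolynomial.eval (x + r • d) p = α + β * r + γ * r ^ 2 := by
  set σ : Fin 3 → Polynomial ℝ := fun i => Polynomial.C (x i) + Polynomial.C (d i) * Polynomial.X
    with hσ
  set P : Polynomial ℝ := MvPolynomial.aeval σ p with hP
  have hdeg : P.natDegree ≤ 2 := by
    rw [hP]
    conv_lhs => rw [p.as_sum]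
    rw [map_sum]
    refine (Polynomial.natDegree_sum_le _ _).trans ?_
    rw [Finset.fold_max_le]
    constructor
    · omega
    intro m hm
    simp only [Function.comp_apply]
    rw [aeval_monomial]
    refine (Polynomial.natDegree_mul_le).trans ?_
    have h1 : (algebraMap ℝ (Polynomial ℝ) (coeff m p)).natDegree = 0 := by
      simp [Polynomial.natDegree_C]
    rw [h1, zero_add]
    rw [Finsupp.prod]
    refine (Polynomial.natDegree_prod_le _ _).trans ?_
    have h2 : ∀ i ∈ m.support, (σ i ^ m i).natDegree ≤ m i := by
      intro i _
      refine (Polynomial.natDegree_pow_le).trans ?_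
      have : (σ i).natDegree ≤ 1 := by
        refine (Polynomial.natDegree_add_le _ _).trans ?_
        simp [Polynomial.natDegree_C]
        exact (Polynomial.natDegree_C_mul_le _ _).trans (by simp)
      calc m i * (σ i).natDegree ≤ m i * 1 := Nat.mul_le_mul_left _ this
        _ = m i := Nat.mul_one _
    refine (Finset.sum_le_sum h2).trans ?_
    have : ∑ i ∈ m.support, m i ≤ p.totalDegree := MvPolynomial.le_totalDegree hm
    omega
  have hev : ∀ r : ℝ, MvPolynomial.eval (x + r • d) p = P.eval r := by
    intro r
    have h1 : Polynomial.aeval r P = MvPolynomial.aeval (fun i => Polynomial.aeval r (σ i)) p :=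
      comp_aeval_apply (f := σ) (Polynomial.aeval r) p
    have h2 : (fun i => Polynomial.aeval r (σ i)) = fun i => x i + r * d i := by
      funext i; simp [hσ]; ring
    have h3 : Polynomial.aeval r P = P.eval r := by
      simp only [Polynomial.coe_aeval_eq_eval]
    have h4 : MvPolynomial.aeval (fun i => x i + r * d i) p
        = MvPolynomial.eval (fun i => x i + r * d i) p := by
      rw [MvPolynomial.aeval_def]
      rfl
    have h5 : (x + r • d) = fun i => x i + r * d i := by
      funext i; simp [Pi.add_apply, Pi.smul_apply, smul_eq_mul]
    rw [h5, ← h4, ← h2, ← h1, h3]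
  refine ⟨P.coeff 0, P.coeff 1, P.coeff 2, fun r => ?_⟩
  rw [hev r, Polynomial.eval_eq_sum_range' (Nat.lt_succ_of_le hdeg)]
  simp [Finset.sum_range_succ]
  try ring


/-- Core geometric fact: a function quadratic along lines that vanishes on three
faces of the reference tetrahedron vanishes everywhere. -/
lemma core (G : ℝ → ℝ → ℝ → ℝ)
    (hline : ∀ s t u ds dt du : ℝ, ∃ α β γ : ℝ, ∀ r : ℝ,
      G (s + r * ds) (t + r * dt) (u + r * du) = α + β * r + γ * r ^ 2)
    (H1 : ∀ s u : ℝ, 0 ≤ s → 0 ≤ u → s + u ≤ 1 → G s 0 u = 0)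
    (H2 : ∀ t u : ℝ, 0 ≤ t → 0 ≤ u → t + u ≤ 1 → G (1 - u) t u = 0)
    (H3 : ∀ s t : ℝ, 0 ≤ t → t ≤ s → s ≤ 1 → G s t 0 = 0) :
    ∀ s t u : ℝ, G s t u = 0 := by
  have P1 : ∀ s u : ℝ, G s 0 u = 0 := by
    have A : ∀ u : ℝ, 0 ≤ u → u < 1 → ∀ s : ℝ, G s 0 u = 0 := by
      intro u hu0 hu1 s
      obtain ⟨α, β, γ, hq⟩ := hline 0 0 u 1 0 0
      have key := quad_ext (x1 := 0) (x2 := (1-u)/2) (x3 := 1-u)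
        (ne_of_lt (by linarith)) (ne_of_lt (by linarith)) (ne_of_lt (by linarith))
        (by rw [← hq 0]; convert H1 0 u le_rfl hu0 (by linarith) using 2 <;> ring)
        (by rw [← hq ((1-u)/2)];
            convert H1 ((1-u)/2) u (by linarith) hu0 (by linarith) using 2 <;> ring)
        (by rw [← hq (1-u)];
            convert H1 (1-u) u (by linarith) hu0 (by linarith) using 2 <;> ring)
      have := (hq s).trans (key s)
      convert this using 2 <;> ring
    intro s u
    obtain ⟨α, β, γ, hq⟩ := hline s 0 0 0 0 1
    have key := quad_ext (x1 := 0) (x2 := 1/4) (x3 := 1/2)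
      (by norm_num) (by norm_num) (by norm_num)
      (by rw [← hq 0]; convert A 0 le_rfl one_pos s using 2 <;> ring)
      (by rw [← hq (1/4)]; convert A (1/4) (by norm_num) (by norm_num) s using 2 <;> ring)
      (by rw [← hq (1/2)]; convert A (1/2) (by norm_num) (by norm_num) s using 2 <;> ring)
    have := (hq u).trans (key u)
    convert this using 2 <;> ring
  have P2 : ∀ s t : ℝ, G s t 0 = 0 := by
    have A : ∀ t : ℝ, 0 < t → t < 1 → ∀ s : ℝ, G s t 0 = 0 := by
      intro t ht0 ht1 s
      obtain ⟨α, β, γ, hq⟩ := hline 0 t 0 1 0 0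
      have key := quad_ext (x1 := t) (x2 := (t+1)/2) (x3 := 1)
        (ne_of_lt (by linarith)) (ne_of_lt (by linarith)) (ne_of_lt (by linarith))
        (by rw [← hq t]; convert H3 t t (le_of_lt ht0) le_rfl (le_of_lt ht1) using 2 <;> ring)
        (by rw [← hq ((t+1)/2)];
            convert H3 ((t+1)/2) t (le_of_lt ht0) (by linarith) (by linarith) using 2 <;> ring)
        (by rw [← hq 1]; convert H3 1 t (le_of_lt ht0) (le_of_lt ht1) le_rfl using 2 <;> ring)
      have := (hq s).trans (key s)
      convert this using 2 <;> ring
    intro s t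
    obtain ⟨α, β, γ, hq⟩ := hline s 0 0 0 1 0
    have key := quad_ext (x1 := 1/4) (x2 := 1/3) (x3 := 1/2)
      (by norm_num) (by norm_num) (by norm_num)
      (by rw [← hq (1/4)]; convert A (1/4) (by norm_num) (by norm_num) s using 2 <;> ring)
      (by rw [← hq (1/3)]; convert A (1/3) (by norm_num) (by norm_num) s using 2 <;> ring)
      (by rw [← hq (1/2)]; convert A (1/2) (by norm_num) (by norm_num) s using 2 <;> ring)
    have := (hq t).trans (key t)
    convert this using 2 <;> ring
  have P3 : ∀ t u : ℝ, G (1 - u) t u = 0 := by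
    have A : ∀ u : ℝ, 0 ≤ u → u < 1 → ∀ t : ℝ, G (1 - u) t u = 0 := by
      intro u hu0 hu1 t
      obtain ⟨α, β, γ, hq⟩ := hline (1-u) 0 u 0 1 0
      have key := quad_ext (x1 := 0) (x2 := (1-u)/2) (x3 := 1-u)
        (ne_of_lt (by linarith)) (ne_of_lt (by linarith)) (ne_of_lt (by linarith))
        (by rw [← hq 0]; convert H2 0 u le_rfl hu0 (by linarith) using 2 <;> ring)
        (by rw [← hq ((1-u)/2)];
            convert H2 ((1-u)/2) u (by linarith) hu0 (by linarith) using 2 <;> ring)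
        (by rw [← hq (1-u)];
            convert H2 (1-u) u (by linarith) hu0 (by linarith) using 2 <;> ring)
      have := (hq t).trans (key t)
      convert this using 2 <;> ring
    intro t u
    obtain ⟨α, β, γ, hq⟩ := hline 1 t 0 (-1) 0 1
    have key := quad_ext (x1 := 0) (x2 := 1/4) (x3 := 1/2)
      (by norm_num) (by norm_num) (by norm_num)
      (by rw [← hq 0]; convert A 0 le_rfl one_pos t using 2 <;> ring)
      (by rw [← hq (1/4)]; convert A (1/4) (by norm_num) (by norm_num) t using 2 <;> ring)
      (by rw [← hq (1/2)]; convert A (1/2) (by norm_num) (by norm_num) t using 2 <;> ring)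
    have := (hq u).trans (key u)
    convert this using 2 <;> ring
  have S4 : ∀ s t u : ℝ, t ≠ u → s ≠ 1 → s + u - t ≠ 1 → G s t u = 0 := by
    intro s t u htu hs1 hsut
    obtain ⟨α, β, γ, hq⟩ := hline s t u 0 1 1
    have key := quad_ext (x1 := -t) (x2 := -u) (x3 := 1-s-u)
      (by intro h; exact htu (by linarith))
      (by intro h; exact hsut (by linarith))
      (by intro h; exact hs1 (by linarith))
      (by rw [← hq (-t)]; convert P1 s (u - t) using 2 <;> ring)
      (by rw [← hq (-u)]; convert P2 s (t - u) using 2 <;> ring)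
      (by rw [← hq (1-s-u)]; convert P3 (t+1-s-u) (1-s) using 2 <;> ring)
    have := (hq 0).trans (key 0)
    convert this using 2 <;> ring
  have S5 : ∀ s t u : ℝ, t ≠ u → G s t u = 0 := by
    intro s t u htu
    obtain ⟨α, β, γ, hq⟩ := hline s t u 1 0 0
    have key := quad_cof2 (b1 := 1 - s) (b2 := 1 + t - u - s) (fun r h1 h2 => by
      rw [← hq r]
      convert S4 (s+r) t u htu (by intro h; exact h1 (by linarith))
        (by intro h; exact h2 (by linarith)) using 2 <;> ring)
    have := (hq 0).trans (key 0)
    convert this using 2 <;> ring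
  intro s t u
  obtain ⟨α, β, γ, hq⟩ := hline s t u 0 1 0
  have key := quad_cof1 (b1 := u - t) (fun r h1 => by
    rw [← hq r]
    convert S5 s (t+r) u (by intro h; exact h1 (by linarith)) using 2 <;> ring)
  have := (hq 0).trans (key 0)
  convert this using 2 <;> ring


lemma exists_T (v : Fin 5 → Fin 3 → ℝ)
    (hpar : v 0 - v 1 + v 2 - v 3 = 0)
    (hnd1 : AffineIndependent ℝ ![v 2, v 0, v 1, v 4]) :
    ∃ T : (Fin 3 → ℝ) →ₗ[ℝ] (Fin 3 → ℝ),
      (∀ s t u : ℝ,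
        T (s • (v 1 - v 0) + t • (v 3 - v 0) + u • (v 4 - v 0)) = ![s, t, u]) ∧
      (∀ y : Fin 3 → ℝ,
        y = T y 0 • (v 1 - v 0) + T y 1 • (v 3 - v 0) + T y 2 • (v 4 - v 0)) := by
  set a := v 1 - v 0 with ha
  set b := v 3 - v 0 with hb
  set c := v 4 - v 0 with hc
  have hv2 : v 2 - v 0 = a + b := by
    rw [ha, hb]
    have : v 2 = v 1 + v 3 - v 0 := by
      have := hpar
      funext i
      have h := congrFun hpar i
      simp [Pi.sub_apply, Pi.add_apply] at h ⊢
      linarith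
    rw [this]
    funext i
    simp [Pi.sub_apply, Pi.add_apply]
    ring
  have hli0 := (affineIndependent_iff_linearIndependent_vsub ℝ ![v 2, v 0, v 1, v 4] 1).mp hnd1
  have ginj : Function.Injective
      (![⟨0, by decide⟩, ⟨2, by decide⟩, ⟨3, by decide⟩] :
        Fin 3 → {x : Fin 4 // x ≠ 1}) := by
    intro i j hij
    fin_cases i <;> fin_cases j <;> simp_all
  have hli1 : LinearIndependent ℝ ![v 2 - v 0, v 1 - v 0, v 4 - v 0] := by
    have h := hli0.comp _ ginj
    convert h using 1
    funext i
    fin_cases i <;> simp [vsub_eq_sub]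
    all_goals rfl
  have hli : LinearIndependent ℝ ![a, b, c] := by
    rw [Fintype.linearIndependent_iff] at hli1 ⊢
    intro g hg
    have key : ∑ i, (![g 1, g 0 - g 1, g 2] i) • (![v 2 - v 0, v 1 - v 0, v 4 - v 0] i) = 0 := by
      rw [Fin.sum_univ_three] at hg ⊢
      simp only [Matrix.cons_val_zero, Matrix.cons_val_one, Matrix.head_cons,
        Matrix.cons_val_two, Matrix.tail_cons] at hg ⊢
      rw [hv2]
      rw [← hg]
      module
    have h1 := hli1 _ key 0
    have h2 := hli1 _ key 1
    have h3 := hli1 _ key 2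
    simp only [Matrix.cons_val_zero, Matrix.cons_val_one, Matrix.head_cons,
      Matrix.cons_val_two, Matrix.tail_cons] at h1 h2 h3
    intro i
    fin_cases i <;> simp <;> linarith
  have hcard : Fintype.card (Fin 3) = Module.finrank ℝ (Fin 3 → ℝ) := by
    simp
  let B := basisOfLinearIndependentOfCardEqFinrank hli hcard
  have hB : ∀ i, B i = ![a, b, c] i := fun i => by
    simp [B, coe_basisOfLinearIndependentOfCardEqFinrank]
  refine ⟨(Finsupp.linearEquivFunOnFinite ℝ ℝ (Fin 3)).toLinearMap.comp B.repr.toLinearMap,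
    ?_, ?_⟩
  · intro s t u
    have hx : s • a + t • b + u • c = s • B 0 + t • B 1 + u • B 2 := by
      rw [hB 0, hB 1, hB 2]; simp
    have hr : B.repr (s • B 0 + t • B 1 + u • B 2)
        = s • Finsupp.single 0 1 + t • Finsupp.single 1 1 + u • Finsupp.single 2 1 := by
      simp
    funext i
    simp only [LinearMap.comp_apply, LinearEquiv.coe_toLinearMap, hx, hr]
    fin_cases i <;> simp [Finsupp.linearEquivFunOnFinite_apply, Finsupp.single_apply]
  · intro y
    have := B.sum_repr y
    rw [Fin.sum_univ_three] at this
    rw [hB 0, hB 1, hB 2] at this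
    simp only [Matrix.cons_val_zero, Matrix.cons_val_one, Matrix.head_cons,
      Matrix.cons_val_two, Matrix.tail_cons] at this
    exact this.symm


lemma mem_hull3 {A B C x : Fin 3 → ℝ} {α β γ : ℝ} (hα : 0 ≤ α) (hβ : 0 ≤ β) (hγ : 0 ≤ γ)
    (hsum : α + β + γ = 1) (hx : x = α • A + β • B + γ • C) :
    x ∈ convexHull ℝ ({A, B, C} : Set (Fin 3 → ℝ)) := by
  have h := Finset.centerMass_mem_convexHull (Finset.univ : Finset (Fin 3))
    (w := ![α, β, γ]) (z := ![A, B, C]) (s := {A, B, C})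
    (fun i _ => by fin_cases i <;> simpa)
    (by rw [Fin.sum_univ_three]; simp; linarith)
    (fun i _ => by fin_cases i <;> simp)
  convert h using 1
  rw [Finset.centerMass, Fin.sum_univ_three, Fin.sum_univ_three]
  simp only [Matrix.cons_val_zero, Matrix.cons_val_one, Matrix.head_cons,
    Matrix.cons_val_two, Matrix.tail_cons]
  rw [hsum, inv_one, one_smul, hx]

lemma mem_hull4 {A B C D x : Fin 3 → ℝ} {α β γ δ : ℝ}
    (hα : 0 ≤ α) (hβ : 0 ≤ β) (hγ : 0 ≤ γ) (hδ : 0 ≤ δ)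
    (hsum : α + β + γ + δ = 1) (hx : x = α • A + β • B + γ • C + δ • D) :
    x ∈ convexHull ℝ ({A, B, C, D} : Set (Fin 3 → ℝ)) := by
  have h := Finset.centerMass_mem_convexHull (Finset.univ : Finset (Fin 4))
    (w := ![α, β, γ, δ]) (z := ![A, B, C, D]) (s := {A, B, C, D})
    (fun i _ => by fin_cases i <;> simpa)
    (by rw [Fin.sum_univ_four]; simp; linarith)
    (fun i _ => by fin_cases i <;> simp)
  convert h using 1
  rw [Finset.centerMass, Fin.sum_univ_four, Fin.sum_univ_four]
  simp only [Matrix.cons_val_zero, Matrix.cons_val_one, Matrix.head_cons,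
    Matrix.cons_val_two, Matrix.tail_cons, Matrix.cons_val_three]
  rw [hsum, inv_one, one_smul, hx]

lemma hull3_ex {A B C x : Fin 3 → ℝ}
    (hx : x ∈ convexHull ℝ ({A, B, C} : Set (Fin 3 → ℝ))) :
    ∃ α β γ : ℝ, 0 ≤ α ∧ 0 ≤ β ∧ 0 ≤ γ ∧ α + β + γ = 1 ∧ x = α • A + β • B + γ • C := by
  rw [show ({A, B, C} : Set (Fin 3 → ℝ)) = insert A {B, C} from rfl,
    convexHull_insert ⟨B, by simp⟩, mem_convexJoin] at hx
  obtain ⟨a, ha, y, hy, hseg⟩ := hx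
  rw [convexHull_pair] at hy
  obtain ⟨b1, b2, hb1, hb2, hbsum, hby⟩ := hy
  obtain ⟨a1, a2, ha1, ha2, hasum, hax⟩ := hseg
  rw [Set.mem_singleton_iff] at ha
  subst ha
  refine ⟨a1, a2 * b1, a2 * b2, ha1, by positivity, by positivity, by nlinarith, ?_⟩
  rw [← hax, ← hby]
  simp only [smul_add, smul_smul]
  module

lemma hull4_ex {A B C D x : Fin 3 → ℝ}
    (hx : x ∈ convexHull ℝ ({A, B, C, D} : Set (Fin 3 → ℝ))) :
    ∃ α β γ δ : ℝ, 0 ≤ α ∧ 0 ≤ β ∧ 0 ≤ γ ∧ 0 ≤ δ ∧ α + β + γ + δ = 1 ∧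
      x = α • A + β • B + γ • C + δ • D := by
  rw [show ({A, B, C, D} : Set (Fin 3 → ℝ)) = insert A {B, C, D} from rfl,
    convexHull_insert ⟨B, by simp⟩, mem_convexJoin] at hx
  obtain ⟨a, ha, y, hy, hseg⟩ := hx
  rw [Set.mem_singleton_iff] at ha
  subst ha
  obtain ⟨β, γ, δ, hβ, hγ, hδ, hsum, hby⟩ := hull3_ex hy
  obtain ⟨a1, a2, ha1, ha2, hasum, hax⟩ := hseg
  refine ⟨a1, a2 * β, a2 * γ, a2 * δ, ha1, by positivity, by positivity, by positivity,
    by nlinarith, ?_⟩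
  rw [← hax, hby]
  simp only [smul_add, smul_smul]
  module

lemma affine_form (l : (Fin 3 → ℝ) →ₗ[ℝ] ℝ) (κ : ℝ) :
    ∃ (a : ℝ) (w : Fin 3 → ℝ), ∀ x : Fin 3 → ℝ, κ + l x = a + w ⬝ᵥ x := by
  refine ⟨κ, fun i => l (fun j => if i = j then 1 else 0), fun x => ?_⟩
  rw [LinearMap.pi_apply_eq_sum_univ l x, dotProduct]
  congr 1
  refine Finset.sum_congr rfl fun i _ => ?_
  simp [mul_comm]

lemma affine_poly (l : (Fin 3 → ℝ) →ₗ[ℝ] ℝ) (κ : ℝ) :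
    ∃ p : MvPolynomial (Fin 3) ℝ, p.totalDegree ≤ 1 ∧
      ∀ x : Fin 3 → ℝ, MvPolynomial.eval x p = κ + l x := by
  refine ⟨MvPolynomial.C κ + ∑ i, MvPolynomial.C (l (fun j => if i = j then 1 else 0)) *
    MvPolynomial.X i, ?_, fun x => ?_⟩
  · refine (totalDegree_add _ _).trans ?_
    rw [totalDegree_C]
    simp only [Nat.max_le, Nat.zero_le, true_and, zero_le]
    refine (totalDegree_finset_sum _ _).trans ?_
    refine Finset.sup_le fun i _ => ?_
    refine (totalDegree_mul _ _).trans ?_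
    rw [totalDegree_C, totalDegree_X]
  · rw [map_add, eval_C, map_sum]
    congr 1
    rw [LinearMap.pi_apply_eq_sum_univ l x]
    refine Finset.sum_congr rfl fun i _ => ?_
    simp [mul_comm]

/-- First sub-tetrahedron of the pyramid. -/
noncomputable def pyrT1 (v : Fin 5 → Fin 3 → ℝ) : Set (Fin 3 → ℝ) :=
  convexHull ℝ {v 2, v 0, v 1, v 4}

/-- Second sub-tetrahedron of the pyramid. -/
noncomputable def pyrT2 (v : Fin 5 → Fin 3 → ℝ) : Set (Fin 3 → ℝ) :=
  convexHull ℝ {v 0, v 2, v 3, v 4}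

/-- The pyramid `K = T₁ ∪ T₂`. -/
noncomputable def pyrK (v : Fin 5 → Fin 3 → ℝ) : Set (Fin 3 → ℝ) :=
  pyrT1 v ∪ pyrT2 v

/-- Membership in the composite space `S(K)`: continuous on `K`, piecewise of
total degree ≤ 2, affine on each triangular face, bilinear on the base. -/
noncomputable def memSK (v : Fin 5 → Fin 3 → ℝ) (f : (Fin 3 → ℝ) → ℝ) : Prop :=
  ContinuousOn f (pyrK v) ∧
  (∃ p : MvPolynomial (Fin 3) ℝ, p.totalDegree ≤ 2 ∧
    ∀ x ∈ pyrT1 v, f x = MvPolynomial.eval x p) ∧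
  (∃ p : MvPolynomial (Fin 3) ℝ, p.totalDegree ≤ 2 ∧
    ∀ x ∈ pyrT2 v, f x = MvPolynomial.eval x p) ∧
  (∀ F ∈ ({{v 0, v 1, v 4}, {v 1, v 2, v 4}, {v 2, v 3, v 4}, {v 0, v 3, v 4}} :
      Set (Set (Fin 3 → ℝ))),
    ∃ (a : ℝ) (b : Fin 3 → ℝ), ∀ x ∈ convexHull ℝ F, f x = a + b ⬝ᵥ x) ∧
  (∃ c00 c10 c01 c11 : ℝ, ∀ s t : ℝ, s ∈ Set.Icc (0:ℝ) 1 → t ∈ Set.Icc (0:ℝ) 1 →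
    f (v 0 + s • (v 1 - v 0) + t • (v 3 - v 0)) =
      c00 + c10 * s + c01 * t + c11 * (s * t))

lemma unisolv (v : Fin 5 → Fin 3 → ℝ)
    (hpar : v 0 - v 1 + v 2 - v 3 = 0)
    (hnd1 : AffineIndependent ℝ ![v 2, v 0, v 1, v 4])
    (f : (Fin 3 → ℝ) → ℝ) (hf : memSK v f) (h0 : ∀ j, f (v j) = 0) :
    ∀ x ∈ pyrK v, f x = 0 := by
  obtain ⟨T, hT, hrec⟩ := exists_T v hpar hnd1
  set a := v 1 - v 0 with ha
  set b := v 3 - v 0 with hb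
  set c := v 4 - v 0 with hc
  have hv2 : v 2 = v 0 + a + b := by
    funext i
    have h := congrFun hpar i
    simp only [ha, hb, Pi.sub_apply, Pi.add_apply, Pi.zero_apply] at h ⊢
    linarith
  have hpt1 : v 1 = v 0 + a := by rw [ha]; module
  have hpt3 : v 3 = v 0 + b := by rw [hb]; module
  have hpt4 : v 4 = v 0 + c := by rw [hc]; module
  -- base vanishes
  obtain ⟨c00, c10, c01, c11, hbil⟩ := hf.2.2.2.2
  have e00 := hbil 0 0 (by norm_num) (by norm_num)
  have e10 := hbil 1 0 (by norm_num) (by norm_num)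
  have e01 := hbil 0 1 (by norm_num) (by norm_num)
  have e11 := hbil 1 1 (by norm_num) (by norm_num)
  rw [show v 0 + (0:ℝ) • a + (0:ℝ) • b = v 0 by module, h0 0] at e00
  rw [show v 0 + (1:ℝ) • a + (0:ℝ) • b = v 1 by rw [hpt1]; module, h0 1] at e10
  rw [show v 0 + (0:ℝ) • a + (1:ℝ) • b = v 3 by rw [hpt3]; module, h0 3] at e01
  rw [show v 0 + (1:ℝ) • a + (1:ℝ) • b = v 2 by rw [hv2]; module, h0 2] at e11
  norm_num at e00 e10 e01 e11
  have hbase : ∀ s t : ℝ, 0 ≤ s → s ≤ 1 → 0 ≤ t → t ≤ 1 →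
      f (v 0 + s • a + t • b) = 0 := by
    intro s t hs0 hs1 ht0 ht1
    rw [hbil s t ⟨hs0, hs1⟩ ⟨ht0, ht1⟩]
    have h1 : c00 = 0 := by linarith
    have h2 : c10 = 0 := by linarith
    have h3 : c01 = 0 := by linarith
    have h4 : c11 = 0 := by linarith
    rw [h1, h2, h3, h4]; ring
  -- faces vanish
  have faceZero : ∀ (P Q R : Fin 3 → ℝ) (aF : ℝ) (bF : Fin 3 → ℝ),
      (∀ x ∈ convexHull ℝ ({P, Q, R} : Set (Fin 3 → ℝ)), f x = aF + bF ⬝ᵥ x) →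
      f P = 0 → f Q = 0 → f R = 0 →
      ∀ x ∈ convexHull ℝ ({P, Q, R} : Set (Fin 3 → ℝ)), f x = 0 := by
    intro P Q R aF bF haff hP hQ hR x hx
    have eP : aF + bF ⬝ᵥ P = 0 := by
      rw [← haff P (subset_convexHull ℝ _ (by simp))]; exact hP
    have eQ : aF + bF ⬝ᵥ Q = 0 := by
      rw [← haff Q (subset_convexHull ℝ _ (by simp))]; exact hQ
    have eR : aF + bF ⬝ᵥ R = 0 := by
      rw [← haff R (subset_convexHull ℝ _ (by simp))]; exact hR
    obtain ⟨α, β, γ, hα, hβ, hγ, hsum, hxe⟩ := hull3_ex hx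
    rw [haff x hx, hxe]
    have hdot : bF ⬝ᵥ (α • P + β • Q + γ • R)
        = α * (bF ⬝ᵥ P) + β * (bF ⬝ᵥ Q) + γ * (bF ⬝ᵥ R) := by
      simp [dotProduct_add, dotProduct_smul, smul_eq_mul]
    rw [hdot]
    linear_combination α * eP + β * eQ + γ * eR - aF * hsum
  have hfaces := hf.2.2.2.1
  obtain ⟨aF1, bF1, hF1⟩ := hfaces {v 0, v 1, v 4} (by simp)
  obtain ⟨aF2, bF2, hF2⟩ := hfaces {v 1, v 2, v 4} (by simp)
  obtain ⟨aF3, bF3, hF3⟩ := hfaces {v 2, v 3, v 4} (by simp)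
  obtain ⟨aF4, bF4, hF4⟩ := hfaces {v 0, v 3, v 4} (by simp)
  have hz1 := faceZero _ _ _ _ _ hF1 (h0 0) (h0 1) (h0 4)
  have hz2 := faceZero _ _ _ _ _ hF2 (h0 1) (h0 2) (h0 4)
  have hz3 := faceZero _ _ _ _ _ hF3 (h0 2) (h0 3) (h0 4)
  have hz4 := faceZero _ _ _ _ _ hF4 (h0 0) (h0 3) (h0 4)
  obtain ⟨p1, hdeg1, hp1⟩ := hf.2.1
  obtain ⟨p2, hdeg2, hp2⟩ := hf.2.2.1
  -- polynomial on T1 vanishes identically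
  have hG1 : ∀ s t u : ℝ, MvPolynomial.eval (v 0 + s • a + t • b + u • c) p1 = 0 := by
    have := core (fun s t u => MvPolynomial.eval (v 0 + s • a + t • b + u • c) p1)
      (by
        intro s t u ds dt du
        obtain ⟨α, β, γ, hq⟩ := line_quad p1 hdeg1 (v 0 + s • a + t • b + u • c)
          (ds • a + dt • b + du • c)
        refine ⟨α, β, γ, fun r => ?_⟩
        show MvPolynomial.eval
          (v 0 + (s + r * ds) • a + (t + r * dt) • b + (u + r * du) • c) p1 = _
        rw [show v 0 + (s + r * ds) • a + (t + r * dt) • b + (u + r * du) • c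
            = v 0 + s • a + t • b + u • c + r • (ds • a + dt • b + du • c) by module]
        exact hq r)
      (by
        intro s u hs hu hsu
        show MvPolynomial.eval (v 0 + s • a + (0:ℝ) • b + u • c) p1 = 0
        have hmem1 : v 0 + s • a + (0:ℝ) • b + u • c ∈ pyrT1 v := by
          apply mem_hull4 (α := 0) (β := 1 - s - u) (γ := s) (δ := u)
            le_rfl (by linarith) hs hu (by ring)
          rw [hpt1, hpt4]; module
        have hmem2 : v 0 + s • a + (0:ℝ) • b + u • c
            ∈ convexHull ℝ ({v 0, v 1, v 4} : Set (Fin 3 → ℝ)) := by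
          apply mem_hull3 (α := 1 - s - u) (β := s) (γ := u)
            (by linarith) hs hu (by ring)
          rw [hpt1, hpt4]; module
        rw [← hp1 _ hmem1]
        exact hz1 _ hmem2)
      (by
        intro t u ht hu htu
        show MvPolynomial.eval (v 0 + (1-u) • a + t • b + u • c) p1 = 0
        have hmem1 : v 0 + (1-u) • a + t • b + u • c ∈ pyrT1 v := by
          apply mem_hull4 (α := t) (β := 0) (γ := 1 - t - u) (δ := u)
            ht le_rfl (by linarith) hu (by ring)
          rw [hv2, hpt1, hpt4]; module
        have hmem2 : v 0 + (1-u) • a + t • b + u • c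
            ∈ convexHull ℝ ({v 1, v 2, v 4} : Set (Fin 3 → ℝ)) := by
          apply mem_hull3 (α := 1 - t - u) (β := t) (γ := u)
            (by linarith) ht hu (by ring)
          rw [hv2, hpt1, hpt4]; module
        rw [← hp1 _ hmem1]
        exact hz2 _ hmem2)
      (by
        intro s t ht hts hs1
        show MvPolynomial.eval (v 0 + s • a + t • b + (0:ℝ) • c) p1 = 0
        have hmem1 : v 0 + s • a + t • b + (0:ℝ) • c ∈ pyrT1 v := by
          apply mem_hull4 (α := t) (β := 1 - s) (γ := s - t) (δ := 0)
            ht (by linarith) (by linarith) le_rfl (by ring)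
          rw [hv2, hpt1, hpt4]; module
        rw [← hp1 _ hmem1]
        rw [show v 0 + s • a + t • b + (0:ℝ) • c = v 0 + s • a + t • b by module]
        exact hbase s t (by linarith) hs1 ht (by linarith))
    exact this
  -- polynomial on T2 vanishes identically
  have hG2 : ∀ s t u : ℝ, MvPolynomial.eval (v 0 + t • a + s • b + u • c) p2 = 0 := by
    have := core (fun s t u => MvPolynomial.eval (v 0 + t • a + s • b + u • c) p2)
      (by
        intro s t u ds dt du
        obtain ⟨α, β, γ, hq⟩ := line_quad p2 hdeg2 (v 0 + t • a + s • b + u • c)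
          (dt • a + ds • b + du • c)
        refine ⟨α, β, γ, fun r => ?_⟩
        show MvPolynomial.eval
          (v 0 + (t + r * dt) • a + (s + r * ds) • b + (u + r * du) • c) p2 = _
        rw [show v 0 + (t + r * dt) • a + (s + r * ds) • b + (u + r * du) • c
            = v 0 + t • a + s • b + u • c + r • (dt • a + ds • b + du • c) by module]
        exact hq r)
      (by
        intro s u hs hu hsu
        show MvPolynomial.eval (v 0 + (0:ℝ) • a + s • b + u • c) p2 = 0
        have hmem1 : v 0 + (0:ℝ) • a + s • b + u • c ∈ pyrT2 v := by
          apply mem_hull4 (α := 1 - s - u) (β := 0) (γ := s) (δ := u)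
            (by linarith) le_rfl hs hu (by ring)
          rw [hpt3, hpt4]; module
        have hmem2 : v 0 + (0:ℝ) • a + s • b + u • c
            ∈ convexHull ℝ ({v 0, v 3, v 4} : Set (Fin 3 → ℝ)) := by
          apply mem_hull3 (α := 1 - s - u) (β := s) (γ := u)
            (by linarith) hs hu (by ring)
          rw [hpt3, hpt4]; module
        rw [← hp2 _ hmem1]
        exact hz4 _ hmem2)
      (by
        intro t u ht hu htu
        show MvPolynomial.eval (v 0 + t • a + (1-u) • b + u • c) p2 = 0
        have hmem1 : v 0 + t • a + (1-u) • b + u • c ∈ pyrT2 v := by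
          apply mem_hull4 (α := 0) (β := t) (γ := 1 - t - u) (δ := u)
            le_rfl ht (by linarith) hu (by ring)
          rw [hv2, hpt3, hpt4]; module
        have hmem2 : v 0 + t • a + (1-u) • b + u • c
            ∈ convexHull ℝ ({v 2, v 3, v 4} : Set (Fin 3 → ℝ)) := by
          apply mem_hull3 (α := t) (β := 1 - t - u) (γ := u)
            ht (by linarith) hu (by ring)
          rw [hv2, hpt3, hpt4]; module
        rw [← hp2 _ hmem1]
        exact hz3 _ hmem2)
      (by
        intro s t ht hts hs1
        show MvPolynomial.eval (v 0 + t • a + s • b + (0:ℝ) • c) p2 = 0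
        have hmem1 : v 0 + t • a + s • b + (0:ℝ) • c ∈ pyrT2 v := by
          apply mem_hull4 (α := 1 - s) (β := t) (γ := s - t) (δ := 0)
            (by linarith) ht (by linarith) le_rfl (by ring)
          rw [hv2, hpt3, hpt4]; module
        rw [← hp2 _ hmem1]
        rw [show v 0 + t • a + s • b + (0:ℝ) • c = v 0 + t • a + s • b by module]
        exact hbase t s ht (by linarith) (by linarith) hs1)
    exact this
  intro x hx
  have hxform : x = v 0 + T (x - v 0) 0 • a + T (x - v 0) 1 • b + T (x - v 0) 2 • c := by
    have h := hrec (x - v 0)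
    calc x = v 0 + (x - v 0) := by module
      _ = v 0 + (T (x - v 0) 0 • a + T (x - v 0) 1 • b + T (x - v 0) 2 • c) := by rw [← h]
      _ = v 0 + T (x - v 0) 0 • a + T (x - v 0) 1 • b + T (x - v 0) 2 • c := by module
  simp only [pyrK, Set.mem_union] at hx
  rcases hx with hx | hx
  · rw [hp1 x hx]
    have h := hG1 (T (x - v 0) 0) (T (x - v 0) 1) (T (x - v 0) 2)
    rw [← hxform] at h
    exact h
  · rw [hp2 x hx]
    have h := hG2 (T (x - v 0) 1) (T (x - v 0) 0) (T (x - v 0) 2)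
    rw [← hxform] at h
    exact h

lemma poly_combo (qS qT qU qW : MvPolynomial (Fin 3) ℝ)
    (hS : qS.totalDegree ≤ 1) (hT : qT.totalDegree ≤ 1)
    (hU : qU.totalDegree ≤ 1) (hW : qW.totalDegree ≤ 1)
    (c0 c1 c2 c3 c4 c5 : ℝ) :
    ∃ q : MvPolynomial (Fin 3) ℝ, q.totalDegree ≤ 2 ∧
      ∀ x : Fin 3 → ℝ, MvPolynomial.eval x q =
        c0 + c1 * MvPolynomial.eval x qS + c2 * MvPolynomial.eval x qT +
        c3 * MvPolynomial.eval x qU +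
        c4 * (MvPolynomial.eval x qS * MvPolynomial.eval x qT) +
        c5 * (MvPolynomial.eval x qU * MvPolynomial.eval x qW) := by
  refine ⟨C c0 + C c1 * qS + C c2 * qT + C c3 * qU + C c4 * (qS * qT) + C c5 * (qU * qW),
    ?_, fun x => by simp⟩
  have hCmul : ∀ (c : ℝ) (q : MvPolynomial (Fin 3) ℝ) (n : ℕ), q.totalDegree ≤ n →
      (C c * q).totalDegree ≤ n := fun c q n h =>
    (totalDegree_mul _ _).trans (by simpa [totalDegree_C] using h)
  refine (totalDegree_add _ _).trans (max_le ?_ (hCmul _ _ _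
    ((totalDegree_mul _ _).trans (by omega))))
  refine (totalDegree_add _ _).trans (max_le ?_ (hCmul _ _ _
    ((totalDegree_mul _ _).trans (by omega))))
  refine (totalDegree_add _ _).trans (max_le ?_ (hCmul _ _ _ (by omega)))
  refine (totalDegree_add _ _).trans (max_le ?_ (hCmul _ _ _ (by omega)))
  refine (totalDegree_add _ _).trans (max_le ?_ (hCmul _ _ _ (by omega)))
  simp [totalDegree_C]

lemma memSK_sub (v : Fin 5 → Fin 3 → ℝ) (f g : (Fin 3 → ℝ) → ℝ)
    (hf : memSK v f) (hg : memSK v g) : memSK v (fun x => f x - g x) := by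
  obtain ⟨fc, ⟨fp1, fd1, fe1⟩, ⟨fp2, fd2, fe2⟩, ffaces, fc00, fc10, fc01, fc11, fbil⟩ := hf
  obtain ⟨gc, ⟨gp1, gd1, ge1⟩, ⟨gp2, gd2, ge2⟩, gfaces, gc00, gc10, gc01, gc11, gbil⟩ := hg
  refine ⟨fc.sub gc, ⟨fp1 - gp1, ?_, fun x hx => by show f x - g x = _; rw [fe1 x hx, ge1 x hx, map_sub]⟩,
    ⟨fp2 - gp2, ?_, fun x hx => by show f x - g x = _; rw [fe2 x hx, ge2 x hx, map_sub]⟩, ?_,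
    fc00 - gc00, fc10 - gc10, fc01 - gc01, fc11 - gc11, fun s t hs ht => by
      show f _ - g _ = _; rw [fbil s t hs ht, gbil s t hs ht]; ring⟩
  · exact (totalDegree_sub _ _).trans (max_le fd1 gd1)
  · exact (totalDegree_sub _ _).trans (max_le fd2 gd2)
  · intro F hF
    obtain ⟨aF, bF, hFf⟩ := ffaces F hF
    obtain ⟨aG, bG, hFg⟩ := gfaces F hF
    exact ⟨aF - aG, bF - bG, fun x hx => by
      show f x - g x = _; rw [hFf x hx, hFg x hx, sub_dotProduct]; ring⟩

lemma memSK_smul (v : Fin 5 → Fin 3 → ℝ) (c : ℝ) (f : (Fin 3 → ℝ) → ℝ)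
    (hf : memSK v f) : memSK v (fun x => c * f x) := by
  obtain ⟨fc, ⟨fp1, fd1, fe1⟩, ⟨fp2, fd2, fe2⟩, ffaces, fc00, fc10, fc01, fc11, fbil⟩ := hf
  refine ⟨continuousOn_const.mul fc,
    ⟨C c * fp1, ?_, fun x hx => by show c * f x = _; rw [fe1 x hx, _root_.map_mul, eval_C]⟩,
    ⟨C c * fp2, ?_, fun x hx => by show c * f x = _; rw [fe2 x hx, _root_.map_mul, eval_C]⟩, ?_,
    c * fc00, c * fc10, c * fc01, c * fc11, fun s t hs ht => by
      show c * f _ = _; rw [fbil s t hs ht]; ring⟩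
  · exact (totalDegree_mul _ _).trans (by simpa [totalDegree_C] using fd1)
  · exact (totalDegree_mul _ _).trans (by simpa [totalDegree_C] using fd2)
  · intro F hF
    obtain ⟨aF, bF, hFf⟩ := ffaces F hF
    exact ⟨c * aF, c • bF, fun x hx => by
      show c * f x = _; rw [hFf x hx, smul_dotProduct]; simp only [smul_eq_mul]; ring⟩

lemma face_affine_of (g : (Fin 3 → ℝ) → ℝ) (S : Set (Fin 3 → ℝ)) (κ : ℝ)
    (l : (Fin 3 → ℝ) →ₗ[ℝ] ℝ) (h : ∀ x ∈ convexHull ℝ S, g x = κ + l x) :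
    ∃ (a : ℝ) (w : Fin 3 → ℝ), ∀ x ∈ convexHull ℝ S, g x = a + w ⬝ᵥ x := by
  obtain ⟨a, w, haw⟩ := affine_form l κ
  exact ⟨a, w, fun x hx => (h x hx).trans (haw x)⟩


set_option maxHeartbeats 1000000 in
theorem stmt7 (v : Fin 5 → Fin 3 → ℝ)
    (hpar : v 0 - v 1 + v 2 - v 3 = 0)
    (hnd1 : AffineIndependent ℝ ![v 2, v 0, v 1, v 4])
    (hnd2 : AffineIndependent ℝ ![v 0, v 2, v 3, v 4]) :
    -- dim S(K) = 5 and the vertex evaluations are the dual basis: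
    (∃ φ : Fin 5 → (Fin 3 → ℝ) → ℝ,
      (∀ i, memSK v (φ i)) ∧
      (∀ i j, φ i (v j) = if i = j then 1 else 0) ∧
      (∀ f, memSK v f → ∃! c : Fin 5 → ℝ,
        ∀ x ∈ pyrK v, f x = ∑ i, c i * φ i x)) ∧
    -- unisolvence: a member of S(K) vanishing at all five vertices vanishes on K
    (∀ f, memSK v f → (∀ j, f (v j) = 0) → ∀ x ∈ pyrK v, f x = 0) := by
  obtain ⟨T, hT, hrec⟩ := exists_T v hpar hnd1
  set a := v 1 - v 0 with ha
  set b := v 3 - v 0 with hb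
  set c := v 4 - v 0 with hc
  have hv2 : v 2 = v 0 + a + b := by
    funext i
    have h := congrFun hpar i
    simp only [ha, hb, Pi.sub_apply, Pi.add_apply, Pi.zero_apply] at h ⊢
    linarith
  have hpt1 : v 1 = v 0 + a := by rw [ha]; module
  have hpt3 : v 3 = v 0 + b := by rw [hb]; module
  have hpt4 : v 4 = v 0 + c := by rw [hc]; module
  have hTsub : ∀ (x y : Fin 3 → ℝ) (i : Fin 3), T (x - y) i = T x i - T y i :=
    fun x y i => by rw [map_sub]; rfl
  set sf : (Fin 3 → ℝ) → ℝ := fun x => T (x - v 0) 0 with hsf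
  set tf : (Fin 3 → ℝ) → ℝ := fun x => T (x - v 0) 1 with htf
  set uf : (Fin 3 → ℝ) → ℝ := fun x => T (x - v 0) 2 with huf
  have hTd0 : T (v 0 - v 0) = ![0, 0, 0] := by
    rw [show v 0 - v 0 = (0:ℝ) • a + (0:ℝ) • b + (0:ℝ) • c by module]; exact hT 0 0 0
  have hTd1 : T (v 1 - v 0) = ![1, 0, 0] := by
    rw [show v 1 - v 0 = (1:ℝ) • a + (0:ℝ) • b + (0:ℝ) • c by rw [hpt1]; module]
    exact hT 1 0 0
  have hTd2 : T (v 2 - v 0) = ![1, 1, 0] := by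
    rw [show v 2 - v 0 = (1:ℝ) • a + (1:ℝ) • b + (0:ℝ) • c by rw [hv2]; module]
    exact hT 1 1 0
  have hTd3 : T (v 3 - v 0) = ![0, 1, 0] := by
    rw [show v 3 - v 0 = (0:ℝ) • a + (1:ℝ) • b + (0:ℝ) • c by rw [hpt3]; module]
    exact hT 0 1 0
  have hTd4 : T (v 4 - v 0) = ![0, 0, 1] := by
    rw [show v 4 - v 0 = (0:ℝ) • a + (0:ℝ) • b + (1:ℝ) • c by rw [hpt4]; module]
    exact hT 0 0 1
  have hco : ∀ s t : ℝ, T (v 0 + s • a + t • b - v 0) = ![s, t, 0] := fun s t => by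
    rw [show v 0 + s • a + t • b - v 0 = s • a + t • b + (0:ℝ) • c by module]
    exact hT s t 0
  -- continuity of coordinates
  have hTcont : Continuous T := T.continuous_of_finiteDimensional
  have hcS : Continuous sf := by
    rw [hsf]; exact (continuous_apply (0 : Fin 3)).comp
      (hTcont.comp (continuous_id.sub continuous_const))
  have hcT : Continuous tf := by
    rw [htf]; exact (continuous_apply (1 : Fin 3)).comp
      (hTcont.comp (continuous_id.sub continuous_const))
  have hcU : Continuous uf := by
    rw [huf]; exact (continuous_apply (2 : Fin 3)).comp
      (hTcont.comp (continuous_id.sub continuous_const))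
  -- polynomials realizing the coordinates
  obtain ⟨qS, hdqS, heqS⟩ := affine_poly ((LinearMap.proj (0 : Fin 3)).comp T) (-(T (v 0) 0))
  obtain ⟨qT, hdqT, heqT⟩ := affine_poly ((LinearMap.proj (1 : Fin 3)).comp T) (-(T (v 0) 1))
  obtain ⟨qU, hdqU, heqU⟩ := affine_poly ((LinearMap.proj (2 : Fin 3)).comp T) (-(T (v 0) 2))
  have heS : ∀ x, MvPolynomial.eval x qS = sf x := fun x => by
    rw [heqS x]
    simp only [hsf, LinearMap.comp_apply, LinearMap.proj_apply]
    rw [hTsub x (v 0) 0]; ring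
  have heT : ∀ x, MvPolynomial.eval x qT = tf x := fun x => by
    rw [heqT x]
    simp only [htf, LinearMap.comp_apply, LinearMap.proj_apply]
    rw [hTsub x (v 0) 1]; ring
  have heU : ∀ x, MvPolynomial.eval x qU = uf x := fun x => by
    rw [heqU x]
    simp only [huf, LinearMap.comp_apply, LinearMap.proj_apply]
    rw [hTsub x (v 0) 2]; ring
  -- min behaviour on the two tetrahedra
  have hminT1 : ∀ x ∈ pyrT1 v, min (sf x) (tf x) = tf x := by
    intro x hx
    obtain ⟨α, β, γ, δ, hα, hβ, hγ, hδ, hsum, hxe⟩ :=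
      hull4_ex (show x ∈ convexHull ℝ {v 2, v 0, v 1, v 4} from hx)
    rw [show β = 1 - α - γ - δ by linarith] at hxe
    have hTx : T (x - v 0) = ![α + γ, α, δ] := by
      rw [show x - v 0 = (α + γ) • a + α • b + δ • c by
        rw [hxe, hv2, hpt1, hpt4]; module]
      exact hT _ _ _
    simp only [hsf, htf]
    rw [hTx]
    simp only [Matrix.cons_val_zero, Matrix.cons_val_one, Matrix.head_cons]
    exact min_eq_right (by linarith)
  have hminT2 : ∀ x ∈ pyrT2 v, min (sf x) (tf x) = sf x := by
    intro x hx
    obtain ⟨α, β, γ, δ, hα, hβ, hγ, hδ, hsum, hxe⟩ :=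
      hull4_ex (show x ∈ convexHull ℝ {v 0, v 2, v 3, v 4} from hx)
    rw [show α = 1 - β - γ - δ by linarith] at hxe
    have hTx : T (x - v 0) = ![β, β + γ, δ] := by
      rw [show x - v 0 = β • a + (β + γ) • b + δ • c by
        rw [hxe, hv2, hpt3, hpt4]; module]
      exact hT _ _ _
    simp only [hsf, htf]
    rw [hTx]
    simp only [Matrix.cons_val_zero, Matrix.cons_val_one, Matrix.head_cons]
    exact min_eq_left (by linarith)
  -- face coordinate descriptions
  have hface1 : ∀ x ∈ convexHull ℝ ({v 0, v 1, v 4} : Set (Fin 3 → ℝ)),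
      ∃ β γ : ℝ, 0 ≤ β ∧ 0 ≤ γ ∧ β + γ ≤ 1 ∧ sf x = β ∧ tf x = 0 ∧ uf x = γ ∧
        T x 0 = T (v 0) 0 + β ∧ T x 1 = T (v 0) 1 ∧ T x 2 = T (v 0) 2 + γ := by
    intro x hx
    obtain ⟨α, β, γ, hα, hβ, hγ, hsum, hxe⟩ := hull3_ex hx
    rw [show α = 1 - β - γ by linarith] at hxe
    have hTx : T (x - v 0) = ![β, 0, γ] := by
      rw [show x - v 0 = β • a + (0:ℝ) • b + γ • c by rw [hxe, hpt1, hpt4]; module]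
      exact hT _ _ _
    have h0' := hTsub x (v 0) 0
    have h1' := hTsub x (v 0) 1
    have h2' := hTsub x (v 0) 2
    rw [hTx] at h0' h1' h2'
    simp only [Matrix.cons_val_zero, Matrix.cons_val_one, Matrix.head_cons,
      Matrix.cons_val_two, Matrix.tail_cons] at h0' h1' h2'
    refine ⟨β, γ, hβ, hγ, by linarith, ?_, ?_, ?_, by linarith, by linarith, by linarith⟩
    · simp only [hsf]; rw [hTx]; simp
    · simp only [htf]; rw [hTx]; simp
    · simp only [huf]; rw [hTx]; simp
  have hface2 : ∀ x ∈ convexHull ℝ ({v 1, v 2, v 4} : Set (Fin 3 → ℝ)),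
      ∃ β γ : ℝ, 0 ≤ β ∧ 0 ≤ γ ∧ β + γ ≤ 1 ∧ sf x = 1 - γ ∧ tf x = β ∧ uf x = γ ∧
        T x 0 = T (v 0) 0 + (1 - γ) ∧ T x 1 = T (v 0) 1 + β ∧ T x 2 = T (v 0) 2 + γ := by
    intro x hx
    obtain ⟨α, β, γ, hα, hβ, hγ, hsum, hxe⟩ := hull3_ex hx
    rw [show α = 1 - β - γ by linarith] at hxe
    have hTx : T (x - v 0) = ![1 - γ, β, γ] := by
      rw [show x - v 0 = (1 - γ) • a + β • b + γ • c by
        rw [hxe, hv2, hpt1, hpt4]; module]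
      exact hT _ _ _
    have h0' := hTsub x (v 0) 0
    have h1' := hTsub x (v 0) 1
    have h2' := hTsub x (v 0) 2
    rw [hTx] at h0' h1' h2'
    simp only [Matrix.cons_val_zero, Matrix.cons_val_one, Matrix.head_cons,
      Matrix.cons_val_two, Matrix.tail_cons] at h0' h1' h2'
    refine ⟨β, γ, hβ, hγ, by linarith, ?_, ?_, ?_, by linarith, by linarith, by linarith⟩
    · simp only [hsf]; rw [hTx]; simp
    · simp only [htf]; rw [hTx]; simp
    · simp only [huf]; rw [hTx]; simp
  have hface3 : ∀ x ∈ convexHull ℝ ({v 2, v 3, v 4} : Set (Fin 3 → ℝ)),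
      ∃ β γ : ℝ, 0 ≤ β ∧ 0 ≤ γ ∧ β + γ ≤ 1 ∧ sf x = 1 - β - γ ∧ tf x = 1 - γ ∧ uf x = γ ∧
        T x 0 = T (v 0) 0 + (1 - β - γ) ∧ T x 1 = T (v 0) 1 + (1 - γ) ∧
        T x 2 = T (v 0) 2 + γ := by
    intro x hx
    obtain ⟨α, β, γ, hα, hβ, hγ, hsum, hxe⟩ := hull3_ex hx
    rw [show α = 1 - β - γ by linarith] at hxe
    have hTx : T (x - v 0) = ![1 - β - γ, 1 - γ, γ] := by
      rw [show x - v 0 = (1 - β - γ) • a + (1 - γ) • b + γ • c by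
        rw [hxe, hv2, hpt3, hpt4]; module]
      exact hT _ _ _
    have h0' := hTsub x (v 0) 0
    have h1' := hTsub x (v 0) 1
    have h2' := hTsub x (v 0) 2
    rw [hTx] at h0' h1' h2'
    simp only [Matrix.cons_val_zero, Matrix.cons_val_one, Matrix.head_cons,
      Matrix.cons_val_two, Matrix.tail_cons] at h0' h1' h2'
    refine ⟨β, γ, hβ, hγ, by linarith, ?_, ?_, ?_, by linarith, by linarith, by linarith⟩
    · simp only [hsf]; rw [hTx]; simp
    · simp only [htf]; rw [hTx]; simp
    · simp only [huf]; rw [hTx]; simp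
  have hface4 : ∀ x ∈ convexHull ℝ ({v 0, v 3, v 4} : Set (Fin 3 → ℝ)),
      ∃ β γ : ℝ, 0 ≤ β ∧ 0 ≤ γ ∧ β + γ ≤ 1 ∧ sf x = 0 ∧ tf x = β ∧ uf x = γ ∧
        T x 0 = T (v 0) 0 ∧ T x 1 = T (v 0) 1 + β ∧ T x 2 = T (v 0) 2 + γ := by
    intro x hx
    obtain ⟨α, β, γ, hα, hβ, hγ, hsum, hxe⟩ := hull3_ex hx
    rw [show α = 1 - β - γ by linarith] at hxe
    have hTx : T (x - v 0) = ![0, β, γ] := by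
      rw [show x - v 0 = (0:ℝ) • a + β • b + γ • c by rw [hxe, hpt3, hpt4]; module]
      exact hT _ _ _
    have h0' := hTsub x (v 0) 0
    have h1' := hTsub x (v 0) 1
    have h2' := hTsub x (v 0) 2
    rw [hTx] at h0' h1' h2'
    simp only [Matrix.cons_val_zero, Matrix.cons_val_one, Matrix.head_cons,
      Matrix.cons_val_two, Matrix.tail_cons] at h0' h1' h2'
    refine ⟨β, γ, hβ, hγ, by linarith, ?_, ?_, ?_, by linarith, by linarith, by linarith⟩
    · simp only [hsf]; rw [hTx]; simp
    · simp only [htf]; rw [hTx]; simp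
    · simp only [huf]; rw [hTx]; simp
  have hm0 : memSK v (fun x => 1 - sf x - tf x - uf x + sf x * tf x + uf x * min (sf x) (tf x)) := by
    refine ⟨(((((continuous_const.sub hcS).sub hcT).sub hcU).add (hcS.mul hcT)).add (hcU.mul (hcS.min hcT))).continuousOn, ?_, ?_, ?_, ?_⟩
    · obtain ⟨q, hdq, heq⟩ := poly_combo qS qT qU qT hdqS hdqT hdqU hdqT 1 (-1) (-1) (-1) 1 1
      refine ⟨q, hdq, fun x hx => ?_⟩
      show 1 - sf x - tf x - uf x + sf x * tf x + uf x * min (sf x) (tf x) = _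
      rw [heq x, heS x, heT x, heU x]
      rw [hminT1 x hx]; ring
    · obtain ⟨q, hdq, heq⟩ := poly_combo qS qT qU qS hdqS hdqT hdqU hdqS 1 (-1) (-1) (-1) 1 1
      refine ⟨q, hdq, fun x hx => ?_⟩
      show 1 - sf x - tf x - uf x + sf x * tf x + uf x * min (sf x) (tf x) = _
      rw [heq x, heS x, heT x, heU x]
      rw [hminT2 x hx]; ring
    · intro F hF
      simp only [Set.mem_insert_iff, Set.mem_singleton_iff] at hF
      rcases hF with rfl | rfl | rfl | rfl
      · apply face_affine_of _ _ (1 + T (v 0) 0 + T (v 0) 2) (-(((LinearMap.proj (0 : Fin 3)).comp T) + ((LinearMap.proj (2 : Fin 3)).comp T)))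
        intro x hx
        obtain ⟨β, γ, hβ, hγ, hβγ, hsx, htx, hux, e0, e1, e2⟩ := hface1 x hx
        show 1 - sf x - tf x - uf x + sf x * tf x + uf x * min (sf x) (tf x) = _
        simp only [hsx, htx, hux]
        rw [min_eq_right hβ]
        simp only [LinearMap.neg_apply, LinearMap.add_apply, LinearMap.sub_apply,
          LinearMap.zero_apply, LinearMap.comp_apply, LinearMap.proj_apply, e0, e1, e2]
        ring
      · apply face_affine_of _ _ 0 (0 : (Fin 3 → ℝ) →ₗ[ℝ] ℝ)
        intro x hx
        obtain ⟨β, γ, hβ, hγ, hβγ, hsx, htx, hux, e0, e1, e2⟩ := hface2 x hx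
        show 1 - sf x - tf x - uf x + sf x * tf x + uf x * min (sf x) (tf x) = _
        simp only [hsx, htx, hux]
        rw [min_eq_right (by linarith : β ≤ 1 - γ)]
        simp only [LinearMap.neg_apply, LinearMap.add_apply, LinearMap.sub_apply,
          LinearMap.zero_apply, LinearMap.comp_apply, LinearMap.proj_apply, e0, e1, e2]
        ring
      · apply face_affine_of _ _ 0 (0 : (Fin 3 → ℝ) →ₗ[ℝ] ℝ)
        intro x hx
        obtain ⟨β, γ, hβ, hγ, hβγ, hsx, htx, hux, e0, e1, e2⟩ := hface3 x hx
        show 1 - sf x - tf x - uf x + sf x * tf x + uf x * min (sf x) (tf x) = _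
        simp only [hsx, htx, hux]
        rw [min_eq_left (by linarith : 1 - β - γ ≤ 1 - γ)]
        simp only [LinearMap.neg_apply, LinearMap.add_apply, LinearMap.sub_apply,
          LinearMap.zero_apply, LinearMap.comp_apply, LinearMap.proj_apply, e0, e1, e2]
        ring
      · apply face_affine_of _ _ (1 + T (v 0) 1 + T (v 0) 2) (-(((LinearMap.proj (1 : Fin 3)).comp T) + ((LinearMap.proj (2 : Fin 3)).comp T)))
        intro x hx
        obtain ⟨β, γ, hβ, hγ, hβγ, hsx, htx, hux, e0, e1, e2⟩ := hface4 x hx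
        show 1 - sf x - tf x - uf x + sf x * tf x + uf x * min (sf x) (tf x) = _
        simp only [hsx, htx, hux]
        rw [min_eq_left hβ]
        simp only [LinearMap.neg_apply, LinearMap.add_apply, LinearMap.sub_apply,
          LinearMap.zero_apply, LinearMap.comp_apply, LinearMap.proj_apply, e0, e1, e2]
        ring
    · refine ⟨1, (-1), (-1), 1, fun s t hs ht => ?_⟩
      rw [← ha, ← hb]
      simp only [hsf, htf, huf]
      rw [hco s t]
      simp only [Matrix.cons_val_zero, Matrix.cons_val_one, Matrix.head_cons,
        Matrix.cons_val_two, Matrix.tail_cons]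
      ring
  have hm1 : memSK v (fun x => sf x - sf x * tf x - uf x * min (sf x) (tf x)) := by
    refine ⟨((hcS.sub (hcS.mul hcT)).sub (hcU.mul (hcS.min hcT))).continuousOn, ?_, ?_, ?_, ?_⟩
    · obtain ⟨q, hdq, heq⟩ := poly_combo qS qT qU qT hdqS hdqT hdqU hdqT 0 1 0 0 (-1) (-1)
      refine ⟨q, hdq, fun x hx => ?_⟩
      show sf x - sf x * tf x - uf x * min (sf x) (tf x) = _
      rw [heq x, heS x, heT x, heU x]
      rw [hminT1 x hx]; ring
    · obtain ⟨q, hdq, heq⟩ := poly_combo qS qT qU qS hdqS hdqT hdqU hdqS 0 1 0 0 (-1) (-1)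
      refine ⟨q, hdq, fun x hx => ?_⟩
      show sf x - sf x * tf x - uf x * min (sf x) (tf x) = _
      rw [heq x, heS x, heT x, heU x]
      rw [hminT2 x hx]; ring
    · intro F hF
      simp only [Set.mem_insert_iff, Set.mem_singleton_iff] at hF
      rcases hF with rfl | rfl | rfl | rfl
      · apply face_affine_of _ _ (-(T (v 0) 0)) ((LinearMap.proj (0 : Fin 3)).comp T)
        intro x hx
        obtain ⟨β, γ, hβ, hγ, hβγ, hsx, htx, hux, e0, e1, e2⟩ := hface1 x hx
        show sf x - sf x * tf x - uf x * min (sf x) (tf x) = _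
        simp only [hsx, htx, hux]
        rw [min_eq_right hβ]
        simp only [LinearMap.neg_apply, LinearMap.add_apply, LinearMap.sub_apply,
          LinearMap.zero_apply, LinearMap.comp_apply, LinearMap.proj_apply, e0, e1, e2]
        ring
      · apply face_affine_of _ _ (1 + T (v 0) 1 + T (v 0) 2) (-(((LinearMap.proj (1 : Fin 3)).comp T) + ((LinearMap.proj (2 : Fin 3)).comp T)))
        intro x hx
        obtain ⟨β, γ, hβ, hγ, hβγ, hsx, htx, hux, e0, e1, e2⟩ := hface2 x hx
        show sf x - sf x * tf x - uf x * min (sf x) (tf x) = _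
        simp only [hsx, htx, hux]
        rw [min_eq_right (by linarith : β ≤ 1 - γ)]
        simp only [LinearMap.neg_apply, LinearMap.add_apply, LinearMap.sub_apply,
          LinearMap.zero_apply, LinearMap.comp_apply, LinearMap.proj_apply, e0, e1, e2]
        ring
      · apply face_affine_of _ _ 0 (0 : (Fin 3 → ℝ) →ₗ[ℝ] ℝ)
        intro x hx
        obtain ⟨β, γ, hβ, hγ, hβγ, hsx, htx, hux, e0, e1, e2⟩ := hface3 x hx
        show sf x - sf x * tf x - uf x * min (sf x) (tf x) = _
        simp only [hsx, htx, hux]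
        rw [min_eq_left (by linarith : 1 - β - γ ≤ 1 - γ)]
        simp only [LinearMap.neg_apply, LinearMap.add_apply, LinearMap.sub_apply,
          LinearMap.zero_apply, LinearMap.comp_apply, LinearMap.proj_apply, e0, e1, e2]
        ring
      · apply face_affine_of _ _ 0 (0 : (Fin 3 → ℝ) →ₗ[ℝ] ℝ)
        intro x hx
        obtain ⟨β, γ, hβ, hγ, hβγ, hsx, htx, hux, e0, e1, e2⟩ := hface4 x hx
        show sf x - sf x * tf x - uf x * min (sf x) (tf x) = _
        simp only [hsx, htx, hux]
        rw [min_eq_left hβ]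
        simp only [LinearMap.neg_apply, LinearMap.add_apply, LinearMap.sub_apply,
          LinearMap.zero_apply, LinearMap.comp_apply, LinearMap.proj_apply, e0, e1, e2]
        ring
    · refine ⟨0, 1, 0, (-1), fun s t hs ht => ?_⟩
      rw [← ha, ← hb]
      simp only [hsf, htf, huf]
      rw [hco s t]
      simp only [Matrix.cons_val_zero, Matrix.cons_val_one, Matrix.head_cons,
        Matrix.cons_val_two, Matrix.tail_cons]
      ring
  have hm2 : memSK v (fun x => sf x * tf x + uf x * min (sf x) (tf x)) := by
    refine ⟨((hcS.mul hcT).add (hcU.mul (hcS.min hcT))).continuousOn, ?_, ?_, ?_, ?_⟩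
    · obtain ⟨q, hdq, heq⟩ := poly_combo qS qT qU qT hdqS hdqT hdqU hdqT 0 0 0 0 1 1
      refine ⟨q, hdq, fun x hx => ?_⟩
      show sf x * tf x + uf x * min (sf x) (tf x) = _
      rw [heq x, heS x, heT x, heU x]
      rw [hminT1 x hx]; ring
    · obtain ⟨q, hdq, heq⟩ := poly_combo qS qT qU qS hdqS hdqT hdqU hdqS 0 0 0 0 1 1
      refine ⟨q, hdq, fun x hx => ?_⟩
      show sf x * tf x + uf x * min (sf x) (tf x) = _
      rw [heq x, heS x, heT x, heU x]
      rw [hminT2 x hx]; ring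
    · intro F hF
      simp only [Set.mem_insert_iff, Set.mem_singleton_iff] at hF
      rcases hF with rfl | rfl | rfl | rfl
      · apply face_affine_of _ _ 0 (0 : (Fin 3 → ℝ) →ₗ[ℝ] ℝ)
        intro x hx
        obtain ⟨β, γ, hβ, hγ, hβγ, hsx, htx, hux, e0, e1, e2⟩ := hface1 x hx
        show sf x * tf x + uf x * min (sf x) (tf x) = _
        simp only [hsx, htx, hux]
        rw [min_eq_right hβ]
        simp only [LinearMap.neg_apply, LinearMap.add_apply, LinearMap.sub_apply,
          LinearMap.zero_apply, LinearMap.comp_apply, LinearMap.proj_apply, e0, e1, e2]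
        ring
      · apply face_affine_of _ _ (-(T (v 0) 1)) ((LinearMap.proj (1 : Fin 3)).comp T)
        intro x hx
        obtain ⟨β, γ, hβ, hγ, hβγ, hsx, htx, hux, e0, e1, e2⟩ := hface2 x hx
        show sf x * tf x + uf x * min (sf x) (tf x) = _
        simp only [hsx, htx, hux]
        rw [min_eq_right (by linarith : β ≤ 1 - γ)]
        simp only [LinearMap.neg_apply, LinearMap.add_apply, LinearMap.sub_apply,
          LinearMap.zero_apply, LinearMap.comp_apply, LinearMap.proj_apply, e0, e1, e2]
        ring
      · apply face_affine_of _ _ (-(T (v 0) 0)) ((LinearMap.proj (0 : Fin 3)).comp T)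
        intro x hx
        obtain ⟨β, γ, hβ, hγ, hβγ, hsx, htx, hux, e0, e1, e2⟩ := hface3 x hx
        show sf x * tf x + uf x * min (sf x) (tf x) = _
        simp only [hsx, htx, hux]
        rw [min_eq_left (by linarith : 1 - β - γ ≤ 1 - γ)]
        simp only [LinearMap.neg_apply, LinearMap.add_apply, LinearMap.sub_apply,
          LinearMap.zero_apply, LinearMap.comp_apply, LinearMap.proj_apply, e0, e1, e2]
        ring
      · apply face_affine_of _ _ 0 (0 : (Fin 3 → ℝ) →ₗ[ℝ] ℝ)
        intro x hx
        obtain ⟨β, γ, hβ, hγ, hβγ, hsx, htx, hux, e0, e1, e2⟩ := hface4 x hx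
        show sf x * tf x + uf x * min (sf x) (tf x) = _
        simp only [hsx, htx, hux]
        rw [min_eq_left hβ]
        simp only [LinearMap.neg_apply, LinearMap.add_apply, LinearMap.sub_apply,
          LinearMap.zero_apply, LinearMap.comp_apply, LinearMap.proj_apply, e0, e1, e2]
        ring
    · refine ⟨0, 0, 0, 1, fun s t hs ht => ?_⟩
      rw [← ha, ← hb]
      simp only [hsf, htf, huf]
      rw [hco s t]
      simp only [Matrix.cons_val_zero, Matrix.cons_val_one, Matrix.head_cons,
        Matrix.cons_val_two, Matrix.tail_cons]
      ring
  have hm3 : memSK v (fun x => tf x - sf x * tf x - uf x * min (sf x) (tf x)) := by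
    refine ⟨((hcT.sub (hcS.mul hcT)).sub (hcU.mul (hcS.min hcT))).continuousOn, ?_, ?_, ?_, ?_⟩
    · obtain ⟨q, hdq, heq⟩ := poly_combo qS qT qU qT hdqS hdqT hdqU hdqT 0 0 1 0 (-1) (-1)
      refine ⟨q, hdq, fun x hx => ?_⟩
      show tf x - sf x * tf x - uf x * min (sf x) (tf x) = _
      rw [heq x, heS x, heT x, heU x]
      rw [hminT1 x hx]; ring
    · obtain ⟨q, hdq, heq⟩ := poly_combo qS qT qU qS hdqS hdqT hdqU hdqS 0 0 1 0 (-1) (-1)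
      refine ⟨q, hdq, fun x hx => ?_⟩
      show tf x - sf x * tf x - uf x * min (sf x) (tf x) = _
      rw [heq x, heS x, heT x, heU x]
      rw [hminT2 x hx]; ring
    · intro F hF
      simp only [Set.mem_insert_iff, Set.mem_singleton_iff] at hF
      rcases hF with rfl | rfl | rfl | rfl
      · apply face_affine_of _ _ 0 (0 : (Fin 3 → ℝ) →ₗ[ℝ] ℝ)
        intro x hx
        obtain ⟨β, γ, hβ, hγ, hβγ, hsx, htx, hux, e0, e1, e2⟩ := hface1 x hx
        show tf x - sf x * tf x - uf x * min (sf x) (tf x) = _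
        simp only [hsx, htx, hux]
        rw [min_eq_right hβ]
        simp only [LinearMap.neg_apply, LinearMap.add_apply, LinearMap.sub_apply,
          LinearMap.zero_apply, LinearMap.comp_apply, LinearMap.proj_apply, e0, e1, e2]
        ring
      · apply face_affine_of _ _ 0 (0 : (Fin 3 → ℝ) →ₗ[ℝ] ℝ)
        intro x hx
        obtain ⟨β, γ, hβ, hγ, hβγ, hsx, htx, hux, e0, e1, e2⟩ := hface2 x hx
        show tf x - sf x * tf x - uf x * min (sf x) (tf x) = _
        simp only [hsx, htx, hux]
        rw [min_eq_right (by linarith : β ≤ 1 - γ)]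
        simp only [LinearMap.neg_apply, LinearMap.add_apply, LinearMap.sub_apply,
          LinearMap.zero_apply, LinearMap.comp_apply, LinearMap.proj_apply, e0, e1, e2]
        ring
      · apply face_affine_of _ _ (T (v 0) 0 - T (v 0) 1) (((LinearMap.proj (1 : Fin 3)).comp T) - ((LinearMap.proj (0 : Fin 3)).comp T))
        intro x hx
        obtain ⟨β, γ, hβ, hγ, hβγ, hsx, htx, hux, e0, e1, e2⟩ := hface3 x hx
        show tf x - sf x * tf x - uf x * min (sf x) (tf x) = _
        simp only [hsx, htx, hux]
        rw [min_eq_left (by linarith : 1 - β - γ ≤ 1 - γ)]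
        simp only [LinearMap.neg_apply, LinearMap.add_apply, LinearMap.sub_apply,
          LinearMap.zero_apply, LinearMap.comp_apply, LinearMap.proj_apply, e0, e1, e2]
        ring
      · apply face_affine_of _ _ (-(T (v 0) 1)) ((LinearMap.proj (1 : Fin 3)).comp T)
        intro x hx
        obtain ⟨β, γ, hβ, hγ, hβγ, hsx, htx, hux, e0, e1, e2⟩ := hface4 x hx
        show tf x - sf x * tf x - uf x * min (sf x) (tf x) = _
        simp only [hsx, htx, hux]
        rw [min_eq_left hβ]
        simp only [LinearMap.neg_apply, LinearMap.add_apply, LinearMap.sub_apply,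
          LinearMap.zero_apply, LinearMap.comp_apply, LinearMap.proj_apply, e0, e1, e2]
        ring
    · refine ⟨0, 0, 1, (-1), fun s t hs ht => ?_⟩
      rw [← ha, ← hb]
      simp only [hsf, htf, huf]
      rw [hco s t]
      simp only [Matrix.cons_val_zero, Matrix.cons_val_one, Matrix.head_cons,
        Matrix.cons_val_two, Matrix.tail_cons]
      ring
  have hm4 : memSK v (fun x => uf x) := by
    refine ⟨(hcU).continuousOn, ?_, ?_, ?_, ?_⟩
    · obtain ⟨q, hdq, heq⟩ := poly_combo qS qT qU qT hdqS hdqT hdqU hdqT 0 0 0 1 0 0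
      refine ⟨q, hdq, fun x hx => ?_⟩
      show uf x = _
      rw [heq x, heS x, heT x, heU x]
      ring
    · obtain ⟨q, hdq, heq⟩ := poly_combo qS qT qU qS hdqS hdqT hdqU hdqS 0 0 0 1 0 0
      refine ⟨q, hdq, fun x hx => ?_⟩
      show uf x = _
      rw [heq x, heS x, heT x, heU x]
      ring
    · intro F hF
      simp only [Set.mem_insert_iff, Set.mem_singleton_iff] at hF
      rcases hF with rfl | rfl | rfl | rfl
      · apply face_affine_of _ _ (-(T (v 0) 2)) ((LinearMap.proj (2 : Fin 3)).comp T)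
        intro x hx
        obtain ⟨β, γ, hβ, hγ, hβγ, hsx, htx, hux, e0, e1, e2⟩ := hface1 x hx
        show uf x = _
        simp only [hsx, htx, hux]
        simp only [LinearMap.neg_apply, LinearMap.add_apply, LinearMap.sub_apply,
          LinearMap.zero_apply, LinearMap.comp_apply, LinearMap.proj_apply, e0, e1, e2]
        ring
      · apply face_affine_of _ _ (-(T (v 0) 2)) ((LinearMap.proj (2 : Fin 3)).comp T)
        intro x hx
        obtain ⟨β, γ, hβ, hγ, hβγ, hsx, htx, hux, e0, e1, e2⟩ := hface2 x hx
        show uf x = _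
        simp only [hsx, htx, hux]
        simp only [LinearMap.neg_apply, LinearMap.add_apply, LinearMap.sub_apply,
          LinearMap.zero_apply, LinearMap.comp_apply, LinearMap.proj_apply, e0, e1, e2]
        ring
      · apply face_affine_of _ _ (-(T (v 0) 2)) ((LinearMap.proj (2 : Fin 3)).comp T)
        intro x hx
        obtain ⟨β, γ, hβ, hγ, hβγ, hsx, htx, hux, e0, e1, e2⟩ := hface3 x hx
        show uf x = _
        simp only [hsx, htx, hux]
        simp only [LinearMap.neg_apply, LinearMap.add_apply, LinearMap.sub_apply,
          LinearMap.zero_apply, LinearMap.comp_apply, LinearMap.proj_apply, e0, e1, e2]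
        ring
      · apply face_affine_of _ _ (-(T (v 0) 2)) ((LinearMap.proj (2 : Fin 3)).comp T)
        intro x hx
        obtain ⟨β, γ, hβ, hγ, hβγ, hsx, htx, hux, e0, e1, e2⟩ := hface4 x hx
        show uf x = _
        simp only [hsx, htx, hux]
        simp only [LinearMap.neg_apply, LinearMap.add_apply, LinearMap.sub_apply,
          LinearMap.zero_apply, LinearMap.comp_apply, LinearMap.proj_apply, e0, e1, e2]
        ring
    · refine ⟨0, 0, 0, 0, fun s t hs ht => ?_⟩
      rw [← ha, ← hb]
      simp only [hsf, htf, huf]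
      rw [hco s t]
      simp only [Matrix.cons_val_zero, Matrix.cons_val_one, Matrix.head_cons,
        Matrix.cons_val_two, Matrix.tail_cons]
      ring
  set φ : Fin 5 → (Fin 3 → ℝ) → ℝ := ![
    fun x => 1 - sf x - tf x - uf x + sf x * tf x + uf x * min (sf x) (tf x),
    fun x => sf x - sf x * tf x - uf x * min (sf x) (tf x),
    fun x => sf x * tf x + uf x * min (sf x) (tf x),
    fun x => tf x - sf x * tf x - uf x * min (sf x) (tf x),
    fun x => uf x] with hφdef
  have hmem : ∀ i, memSK v (φ i) := by
    intro i
    fin_cases i <;>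
      simp only [hφdef, Matrix.cons_val_zero, Matrix.cons_val_one, Matrix.head_cons,
        Matrix.cons_val_two, Matrix.tail_cons, Matrix.cons_val_three, Matrix.cons_val_four,
        Matrix.cons_val_fin_one, Fin.isValue] <;>
      first
        | exact hm0
        | exact hm1
        | exact hm2
        | exact hm3
        | exact hm4
  -- vertex coordinate values
  have hs0 : sf (v 0) = 0 := by simp only [hsf]; rw [hTd0]; simp
  have ht0 : tf (v 0) = 0 := by simp only [htf]; rw [hTd0]; simp
  have hu0 : uf (v 0) = 0 := by simp only [huf]; rw [hTd0]; simp
  have hs1 : sf (v 1) = 1 := by simp only [hsf]; rw [hTd1]; simp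
  have ht1 : tf (v 1) = 0 := by simp only [htf]; rw [hTd1]; simp
  have hu1 : uf (v 1) = 0 := by simp only [huf]; rw [hTd1]; simp
  have hs2 : sf (v 2) = 1 := by simp only [hsf]; rw [hTd2]; simp
  have ht2 : tf (v 2) = 1 := by simp only [htf]; rw [hTd2]; simp
  have hu2 : uf (v 2) = 0 := by simp only [huf]; rw [hTd2]; simp
  have hs3 : sf (v 3) = 0 := by simp only [hsf]; rw [hTd3]; simp
  have ht3 : tf (v 3) = 1 := by simp only [htf]; rw [hTd3]; simp
  have hu3 : uf (v 3) = 0 := by simp only [huf]; rw [hTd3]; simp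
  have hs4 : sf (v 4) = 0 := by simp only [hsf]; rw [hTd4]; simp
  have ht4 : tf (v 4) = 0 := by simp only [htf]; rw [hTd4]; simp
  have hu4 : uf (v 4) = 1 := by simp only [huf]; rw [hTd4]; simp
  have hδ : ∀ i j, φ i (v j) = if i = j then 1 else 0 := by
    intro i j
    have henum : ∀ k : Fin 5, k = 0 ∨ k = 1 ∨ k = 2 ∨ k = 3 ∨ k = 4 := by decide
    rcases henum i with rfl | rfl | rfl | rfl | rfl <;>
      rcases henum j with rfl | rfl | rfl | rfl | rfl <;>
      simp only [hφdef, Matrix.cons_val_zero, Matrix.cons_val_one, Matrix.head_cons,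
        Matrix.cons_val_two, Matrix.tail_cons, Matrix.cons_val_three, Matrix.cons_val_four,
        Matrix.cons_val_fin_one, Fin.isValue, hs0, ht0, hu0, hs1, ht1, hu1, hs2, ht2, hu2,
        hs3, ht3, hu3, hs4, ht4, hu4] <;>
      norm_num [min_def, Fin.ext_iff] <;>
      rw [if_neg (by decide)]
  have hvK : ∀ j, v j ∈ pyrK v := by
    have hK : pyrK v = pyrT1 v ∪ pyrT2 v := rfl
    intro j
    rw [hK]
    fin_cases j
    · exact Or.inl (subset_convexHull ℝ _ (by simp [pyrT1]))
    · exact Or.inl (subset_convexHull ℝ _ (by simp [pyrT1]))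
    · exact Or.inl (subset_convexHull ℝ _ (by simp [pyrT1]))
    · exact Or.inr (subset_convexHull ℝ _ (by simp [pyrT2]))
    · exact Or.inl (subset_convexHull ℝ _ (by simp [pyrT1]))
  have hsumδ : ∀ (g : Fin 5 → ℝ) (j : Fin 5), ∑ i, g i * φ i (v j) = g j := by
    intro g j
    have : ∀ i, g i * φ i (v j) = if i = j then g i else 0 := by
      intro i
      rw [hδ i j]
      by_cases h : i = j <;> simp [h]
    rw [Finset.sum_congr rfl (fun i _ => this i)]
    simp
  refine ⟨⟨φ, hmem, hδ, ?_⟩, fun f hf h0 => unisolv v hpar hnd1 f hf h0⟩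
  intro f hf
  refine ⟨fun i => f (v i), ?_, ?_⟩
  · -- the representation holds
    have hcsub : memSK v (fun x =>
        ((((f x - f (v 0) * φ 0 x) - f (v 1) * φ 1 x) - f (v 2) * φ 2 x)
          - f (v 3) * φ 3 x) - f (v 4) * φ 4 x) := by
      refine memSK_sub v _ _ (memSK_sub v _ _ (memSK_sub v _ _ (memSK_sub v _ _
        (memSK_sub v _ _ hf ?_) ?_) ?_) ?_) ?_
      · exact memSK_smul v _ _ (hmem 0)
      · exact memSK_smul v _ _ (hmem 1)
      · exact memSK_smul v _ _ (hmem 2)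
      · exact memSK_smul v _ _ (hmem 3)
      · exact memSK_smul v _ _ (hmem 4)
    have hzero : ∀ j, ((((f (v j) - f (v 0) * φ 0 (v j)) - f (v 1) * φ 1 (v j))
        - f (v 2) * φ 2 (v j)) - f (v 3) * φ 3 (v j)) - f (v 4) * φ 4 (v j) = 0 := by
      intro j
      have h5 := hsumδ (fun i => f (v i)) j
      rw [Fin.sum_univ_five] at h5
      try simp only at h5
      linarith
    have hres := unisolv v hpar hnd1 _ hcsub hzero
    intro x hx
    have := hres x hx
    rw [Fin.sum_univ_five]
    try simp only at this ⊢
    linarith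
  · -- uniqueness
    intro d hd
    funext j
    have := hd (v j) (hvK j)
    rw [hsumδ d j] at this
    exact this.symm
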